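/- arXiv:1503.01269 — 6 statements merged into one kernel-verified Lean document; each statement's English description precedes it below -/
import Mathlib

section
/- Let 0 ≤ σ ≤ μ < 1. Among all real polynomials p of degree 2 with p(1) = 1, the minimum over p of the maximum of |p(λ)| over λ ∈ {σ, -σ, μ, -μ} equals (μ² - σ²)/(2 - μ² - σ²), and it is achieved by p(λ) = (λ² - μ²/2 - σ²/2)/(1 - μ²/2 - σ²/2). -/
/-- Optimal second-order polynomial filter: among real polynomials `p` of degree at most 2
with `p 1 = 1`, the minimal value of `max |p λ|` over `λ ∈ {σ, -σ, μ, -μ}` equals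
`(μ² - σ²)/(2 - μ² - σ²)`, achieved by `p λ = (λ² - μ²/2 - σ²/2)/(1 - μ²/2 - σ²/2)`. -/
theorem optimal_second_order_filter (σ μ : ℝ) (hσ : 0 ≤ σ) (hσμ : σ ≤ μ) (hμ : μ < 1) :
    (∀ p : Polynomial ℝ, p.natDegree ≤ 2 → p.eval 1 = 1 →
      (μ ^ 2 - σ ^ 2) / (2 - μ ^ 2 - σ ^ 2) ≤
        max (max |p.eval σ| |p.eval (-σ)|) (max |p.eval μ| |p.eval (-μ)|)) ∧
    (let p : ℝ → ℝ := fun l => (l ^ 2 - μ ^ 2 / 2 - σ ^ 2 / 2) / (1 - μ ^ 2 / 2 - σ ^ 2 / 2);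
      max (max |p σ| |p (-σ)|) (max |p μ| |p (-μ)|) =
        (μ ^ 2 - σ ^ 2) / (2 - μ ^ 2 - σ ^ 2)) := by
  have hμ0 : 0 ≤ μ := hσ.trans hσμ
  have hD : (0:ℝ) < 2 - μ ^ 2 - σ ^ 2 := by nlinarith
  constructor
  · intro p hdeg hp1
    set a := p.coeff 0 with ha
    set b := p.coeff 1 with hb
    set c := p.coeff 2 with hc
    have heval : ∀ x : ℝ, p.eval x = a + b * x + c * x ^ 2 := by
      intro x
      have h3 : p.natDegree < 3 := lt_of_le_of_lt hdeg (by norm_num)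
      rw [Polynomial.eval_eq_sum_range' h3 x]
      simp [Finset.sum_range_succ]
      try ring
    have habc : a + b + c = 1 := by
      have := heval 1; rw [hp1] at this; nlinarith [this]
    have heval' : ∀ x : ℝ, p.eval x = a + b * x + (1 - a - b) * x ^ 2 := by
      intro x
      rw [heval x]
      have : c = 1 - a - b := by linarith
      rw [this]
    set M := max (max |p.eval σ| |p.eval (-σ)|) (max |p.eval μ| |p.eval (-μ)|) with hM
    have h1 : |a + b * μ + (1 - a - b) * μ ^ 2| ≤ M := by
      rw [← heval']; exact (le_max_left _ _).trans (le_max_right _ _)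
    have h2 : |a + b * (-μ) + (1 - a - b) * (-μ) ^ 2| ≤ M := by
      rw [← heval']; exact (le_max_right _ _).trans (le_max_right _ _)
    have h3 : |a + b * σ + (1 - a - b) * σ ^ 2| ≤ M := by
      rw [← heval']; exact (le_max_left _ _).trans (le_max_left _ _)
    have h4 : |a + b * (-σ) + (1 - a - b) * (-σ) ^ 2| ≤ M := by
      rw [← heval']; exact (le_max_right _ _).trans (le_max_left _ _)
    rw [abs_le] at h1 h2 h3 h4
    rw [div_le_iff₀ hD]
    rcases eq_or_lt_of_le hμ0 with h | hμpos
    · have hσ0 : σ = 0 := le_antisymm (hσμ.trans h.ge) hσ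
      have : (0:ℝ) ≤ M := le_trans (abs_nonneg _) ((le_max_left _ _).trans (le_max_left _ _))
      rw [← h, hσ0]
      nlinarith
    · have hc1 : 0 ≤ μ * (1 - σ ^ 2) + (μ ^ 2 - σ ^ 2) := by nlinarith
      have hc2 : 0 ≤ μ * (1 - σ ^ 2) - (μ ^ 2 - σ ^ 2) := by nlinarith
      have hc3 : 0 ≤ μ * (1 - μ ^ 2) := by nlinarith
      have P1 : (0:ℝ) ≤ (μ * (1 - σ ^ 2) + (μ ^ 2 - σ ^ 2)) *
          (M - (a + b * μ + (1 - a - b) * μ ^ 2)) :=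
        mul_nonneg hc1 (by linarith [h1.2])
      have P2 : (0:ℝ) ≤ (μ * (1 - σ ^ 2) - (μ ^ 2 - σ ^ 2)) *
          (M - (a + b * (-μ) + (1 - a - b) * (-μ) ^ 2)) :=
        mul_nonneg hc2 (by linarith [h2.2])
      have P3 : (0:ℝ) ≤ (μ * (1 - μ ^ 2)) *
          (M + (a + b * σ + (1 - a - b) * σ ^ 2)) :=
        mul_nonneg hc3 (by linarith [h3.1])
      have P4 : (0:ℝ) ≤ (μ * (1 - μ ^ 2)) *
          (M + (a + b * (-σ) + (1 - a - b) * (-σ) ^ 2)) :=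
        mul_nonneg hc3 (by linarith [h4.1])
      have key : μ * (μ ^ 2 - σ ^ 2) ≤ μ * (M * (2 - μ ^ 2 - σ ^ 2)) := by
        linarith [P1, P2, P3, P4]
      exact le_of_mul_le_mul_left key hμpos
  · have hD2 : (0:ℝ) < 1 - μ ^ 2 / 2 - σ ^ 2 / 2 := by nlinarith
    have ht : 0 ≤ (μ ^ 2 - σ ^ 2) / (2 - μ ^ 2 - σ ^ 2) :=
      div_nonneg (by nlinarith) hD.le
    have hval1 : (σ ^ 2 - μ ^ 2 / 2 - σ ^ 2 / 2) / (1 - μ ^ 2 / 2 - σ ^ 2 / 2) =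
        -((μ ^ 2 - σ ^ 2) / (2 - μ ^ 2 - σ ^ 2)) := by
      rw [neg_div', div_eq_div_iff hD2.ne' hD.ne']; ring
    have hval2 : (μ ^ 2 - μ ^ 2 / 2 - σ ^ 2 / 2) / (1 - μ ^ 2 / 2 - σ ^ 2 / 2) =
        (μ ^ 2 - σ ^ 2) / (2 - μ ^ 2 - σ ^ 2) := by
      rw [div_eq_div_iff hD2.ne' hD.ne']; ring
    dsimp only
    rw [neg_sq, neg_sq, hval1, hval2, abs_neg, abs_of_nonneg ht]
    simp
end

section
/- If a symmetric matrix P with P·1 = 1 (row sums one) has exactly two distinct eigenvalues λ and -λ (for some λ ≠ 1) on the subspace orthogonal to the all-ones vector, then the matrix (P - λI)(P + λI)/(1 - λ²) equals the orthogonal projection (1/N)·11ᵀ onto the consensus subspace, i.e. two steps of the polynomial filter reach exact average consensus. -/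
open Matrix

/-- If a symmetric `P` with row sums one has exactly the two distinct eigenvalues `λ` and `-λ`
on the subspace orthogonal to the all-ones vector, then `(P - λI)(P + λI)/(1-λ²)` is the
averaging projection `(1/N)·11ᵀ`: two filter steps reach exact average consensus. -/
theorem two_step_finite_time_consensus {N : ℕ} (hN : 0 < N)
    (P : Matrix (Fin N) (Fin N) ℝ) (hsymm : P.IsSymm) (hP1 : P *ᵥ 1 = 1)
    (lam : ℝ) (hlam1 : lam ≠ 1) (hlam2 : lam ≠ -1)
    (heig : ∀ (t : ℝ) (x : Fin N → ℝ), x ≠ 0 → (∑ i, x i) = 0 → P *ᵥ x = t • x →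
      t = lam ∨ t = -lam)
    (hex1 : ∃ x : Fin N → ℝ, x ≠ 0 ∧ (∑ i, x i) = 0 ∧ P *ᵥ x = lam • x)
    (hex2 : ∃ x : Fin N → ℝ, x ≠ 0 ∧ (∑ i, x i) = 0 ∧ P *ᵥ x = (-lam) • x) :
    (1 - lam ^ 2)⁻¹ • ((P - lam • 1) * (P + lam • 1)) =
      (N : ℝ)⁻¹ • Matrix.of (fun _ _ => (1 : ℝ)) := by
  have hNne : (N : ℝ) ≠ 0 := Nat.cast_ne_zero.mpr hN.ne'
  have hlamsq : (1 : ℝ) - lam ^ 2 ≠ 0 := by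
    intro h
    have : (1 - lam) * (1 + lam) = 0 := by ring_nf; linarith
    rcases mul_eq_zero.mp this with h' | h'
    · exact hlam1 (by linarith)
    · exact hlam2 (by linarith)
  -- column sums of P are 1 (symmetry + row sums 1), so mulVec preserves sums
  have hcol : ∀ j, (∑ i, P i j) = 1 := by
    intro j
    have : ∑ i, P j i = 1 := by
      have := congrFun hP1 j
      simpa [mulVec, dotProduct] using this
    calc ∑ i, P i j = ∑ i, P j i := by
          refine Finset.sum_congr rfl fun i _ => ?_
          have := congrFun (congrFun hsymm i) j
          simpa [Matrix.transpose_apply] using this.symm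
      _ = 1 := this
  have hsum : ∀ w : Fin N → ℝ, (∑ i, (P *ᵥ w) i) = ∑ i, w i := by
    intro w
    simp only [mulVec, dotProduct]
    rw [Finset.sum_comm]
    refine Finset.sum_congr rfl fun j _ => ?_
    rw [← Finset.sum_mul, hcol, one_mul]
  have hone : (∑ i : Fin N, (1 : Fin N → ℝ) i) = N := by simp
  -- key: on any eigenvector, P² - λ² acts as (1-λ²)·(avg)·1
  have hkey : ∀ (t : ℝ) (v : Fin N → ℝ), P *ᵥ v = t • v →
      P *ᵥ (P *ᵥ v) = lam ^ 2 • v + ((1 - lam ^ 2) * ((∑ i, v i) / N)) • (1 : Fin N → ℝ) := by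
    intro t v hv
    set c : ℝ := (∑ i, v i) / N with hc
    set w : Fin N → ℝ := v - c • 1 with hw
    have hsumw : (∑ i, w i) = 0 := by
      simp only [hw, Pi.sub_apply, Pi.smul_apply, smul_eq_mul]
      rw [Finset.sum_sub_distrib, ← Finset.mul_sum, hone]
      field_simp [hc]
      rw [hc, div_mul_cancel₀ _ hNne, sub_self]
    have hPw : P *ᵥ w = t • v - c • (1 : Fin N → ℝ) := by
      simp only [hw, Matrix.mulVec_sub, Matrix.mulVec_smul, hP1, hv]
    have htc : t * c = c := by
      have h1 : (∑ i, (P *ᵥ w) i) = 0 := by rw [hsum]; exact hsumw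
      rw [hPw] at h1
      have hsv : (∑ i, v i) = c * N := by rw [hc, div_mul_cancel₀ _ hNne]
      simp only [Pi.sub_apply, Pi.smul_apply, Pi.one_apply, smul_eq_mul, mul_one,
        Finset.sum_sub_distrib, ← Finset.mul_sum, Finset.sum_const, Finset.card_univ,
        Fintype.card_fin, nsmul_eq_mul, hsv] at h1
      have h2 : (t * c - c) * (N : ℝ) = 0 := by linear_combination h1
      rcases mul_eq_zero.mp h2 with h' | h'
      · linarith
      · exact absurd h' hNne
    have hPw' : P *ᵥ w = t • w := by
      rw [hPw, hw]
      ext i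
      simp only [Pi.sub_apply, Pi.smul_apply, Pi.one_apply, smul_eq_mul, mul_one]
      linear_combination htc
    have hP2w : P *ᵥ (P *ᵥ w) = lam ^ 2 • w := by
      by_cases hw0 : w = 0
      · simp [hw0]
      · rcases heig t w hw0 hsumw hPw' with ht | ht
        · rw [hPw', Matrix.mulVec_smul, hPw', ht, smul_smul, ← sq]
        · rw [hPw', Matrix.mulVec_smul, hPw', ht, smul_smul]
          norm_num [sq]
    have hvdec : v = w + c • 1 := by rw [hw]; ring_nf
    rw [hvdec]
    rw [Matrix.mulVec_add, Matrix.mulVec_smul, hP1, Matrix.mulVec_add, Matrix.mulVec_smul, hP1,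
      hP2w]
    ext i
    simp only [Pi.add_apply, Pi.smul_apply, Pi.one_apply, smul_eq_mul, mul_one, Pi.sub_apply, hw]
    ring
  -- the defect matrix
  set J : Matrix (Fin N) (Fin N) ℝ := Matrix.of (fun _ _ => (1 : ℝ)) with hJ
  set K : Matrix (Fin N) (Fin N) ℝ :=
    P * P - lam ^ 2 • (1 : Matrix (Fin N) (Fin N) ℝ) - ((1 - lam ^ 2) * (N : ℝ)⁻¹) • J with hK
  have hJv : ∀ v : Fin N → ℝ, J *ᵥ v = (∑ i, v i) • (1 : Fin N → ℝ) := by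
    intro v; ext i; simp [hJ, mulVec, dotProduct]
  have hKv : ∀ (t : ℝ) (v : Fin N → ℝ), P *ᵥ v = t • v → K *ᵥ v = 0 := by
    intro t v hv
    rw [hK]
    rw [Matrix.sub_mulVec, Matrix.sub_mulVec, Matrix.smul_mulVec, Matrix.smul_mulVec,
      Matrix.one_mulVec, hJv, ← Matrix.mulVec_mulVec, hkey t v hv]
    ext i
    simp only [Pi.sub_apply, Pi.add_apply, Pi.smul_apply, Pi.one_apply, smul_eq_mul, mul_one,
      Pi.zero_apply]
    field_simp
    ring
  -- spectral theorem: eigenvectors of P span ℝ^N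
  have hherm : P.IsHermitian := by
    rw [Matrix.IsHermitian]
    simpa [Matrix.conjTranspose_eq_transpose_of_trivial, Matrix.IsSymm] using hsymm
  set T := Matrix.toEuclideanLin P with hT
  have hTsymm : T.IsSymmetric := Matrix.isHermitian_iff_isSymmetric.mp hherm
  have hspan : (⨆ μ : ℝ, Module.End.eigenspace T μ) = ⊤ := by
    have := hTsymm.orthogonalComplement_iSup_eigenspaces_eq_bot
    rwa [Submodule.orthogonal_eq_bot_iff] at this
  have hker : ∀ μ : ℝ, Module.End.eigenspace T μ ≤ LinearMap.ker (Matrix.toEuclideanLin K) := by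
    intro μ v hv
    rw [Module.End.mem_eigenspace_iff] at hv
    have hv' : P *ᵥ (WithLp.equiv 2 (Fin N → ℝ) v) = μ • (WithLp.equiv 2 (Fin N → ℝ) v) := by
      have := Matrix.ofLp_toEuclideanLin_apply P v
      rw [hT] at hv
      rw [hv, WithLp.ofLp_smul] at this
      exact this.symm
    have := hKv μ _ hv'
    rw [LinearMap.mem_ker, Matrix.toEuclideanLin_apply, show K *ᵥ v.ofLp = 0 from this]
    simp
  have hKlin : Matrix.toEuclideanLin K = 0 := by
    rw [← LinearMap.ker_eq_top, ← top_le_iff, ← hspan]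
    exact iSup_le hker
  have hK0 : K = 0 := by
    apply Matrix.toEuclideanLin.injective
    rw [hKlin, map_zero]
  -- conclude
  have hPP : (P - lam • 1) * (P + lam • 1) = P * P - lam ^ 2 • (1 : Matrix (Fin N) (Fin N) ℝ) := by
    have hc : P * (lam • (1 : Matrix (Fin N) (Fin N) ℝ)) = (lam • 1) * P := by
      rw [mul_smul_comm, smul_mul_assoc, mul_one, one_mul]
    have hsq : (lam • (1 : Matrix (Fin N) (Fin N) ℝ)) * (lam • 1) = lam ^ 2 • 1 := by
      rw [smul_mul_assoc, one_mul, smul_smul, ← sq]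
    rw [sub_mul, mul_add, mul_add, hc, hsq]
    abel
  have hfin : P * P - lam ^ 2 • (1 : Matrix (Fin N) (Fin N) ℝ) = ((1 - lam ^ 2) * (N : ℝ)⁻¹) • J := by
    have := hK0
    rw [hK] at this
    linear_combination (norm := abel) this
  rw [hPP, hfin, smul_smul, ← mul_assoc, inv_mul_cancel₀ hlamsq, one_mul, hJ]
end

section
/- Consider the complete bipartite graph K(2,m) with m ≥ 2, with weight p > 0 on edges incident to one hub and weight q > 0 on edges incident to the other hub (edges between each hub and the m leaf nodes). The nonzero Laplacian eigenvalues are proportional to p+q, and (m+1)(p+q)/2 ± √((m+1)²(p+q)² - 4pqm(m+2))/2. Choosing q = (1/2)(m + √(m²-4))·p makes the set of distinct nonzero eigenvalues have exactly two elements. -/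
open Matrix

/-- Weighted Laplacian of the complete bipartite graph `K(2,m)`: hub `0` is joined to each of
the `m` leaves with weight `p`, hub `1` with weight `q`. -/
def K2mLaplacian (m : ℕ) (p q : ℝ) :
    Matrix (Fin 2 ⊕ Fin m) (Fin 2 ⊕ Fin m) ℝ :=
  fun i j =>
    match i, j with
    | .inl a, .inl b => if a = b then (if a = 0 then m * p else m * q) else 0
    | .inl a, .inr _ => if a = 0 then -p else -q
    | .inr _, .inl a => if a = 0 then -p else -q
    | .inr a, .inr b => if a = b then p + q else 0

lemma K2m_mulVec (m : ℕ) (p q : ℝ) (x : Fin 2 ⊕ Fin m → ℝ) :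
    K2mLaplacian m p q *ᵥ x = Sum.elim
      ![m * p * x (.inl 0) - p * ∑ j, x (.inr j),
        m * q * x (.inl 1) - q * ∑ j, x (.inr j)]
      (fun j => (p + q) * x (.inr j) - p * x (.inl 0) - q * x (.inl 1)) := by
  funext i
  cases i with
  | inl a =>
    fin_cases a <;>
      simp [K2mLaplacian, mulVec, dotProduct, Fintype.sum_sum_type, Fin.sum_univ_two,
        Finset.mul_sum, sub_eq_add_neg]
  | inr j =>
    simp [K2mLaplacian, mulVec, dotProduct, Fintype.sum_sum_type, Fin.sum_univ_two,
      Finset.sum_ite_eq', sub_eq_add_neg]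
    ring

/-- Existence of an eigenvector for any root of the quadratic factor. -/
lemma K2m_quad_eigen (m : ℕ) (hm : 2 ≤ m) (p q : ℝ) (hp : 0 < p) (hq : 0 < q) (lam : ℝ)
    (hlam : lam ^ 2 - (m + 1) * (p + q) * lam + m * (m + 2) * p * q = 0) :
    ∃ x : Fin 2 ⊕ Fin m → ℝ, x ≠ 0 ∧ K2mLaplacian m p q *ᵥ x = lam • x := by
  have hm0 : (0:ℕ) < m := by omega
  by_cases hc : (m * p - lam) * (m * q - lam) = 0
  · -- degenerate case: lam = m p or lam = m q, forcing p = q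
    have hpq : p = q := by
      rcases mul_eq_zero.mp hc with h | h
      · have h1 : lam = m * p := by linarith
        have h2 : (m:ℝ) * p * (q - p) = 0 := by nlinarith [hlam, h1]
        have hmp : (m:ℝ) * p ≠ 0 := by positivity
        have := (mul_eq_zero.mp h2).resolve_left hmp
        linarith
      · have h1 : lam = m * q := by linarith
        have h2 : (m:ℝ) * q * (q - p) = 0 := by nlinarith [hlam, h1]
        have hmq : (m:ℝ) * q ≠ 0 := by positivity
        have := (mul_eq_zero.mp h2).resolve_left hmq
        linarith
    have hlp : lam = m * p := by
      rcases mul_eq_zero.mp hc with h | h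
      · linarith
      · rw [hpq]; linarith
    refine ⟨Sum.elim ![1, -1] (fun _ => 0), ?_, ?_⟩
    · intro h
      have := congrFun h (.inl 0)
      simp at this
    · rw [K2m_mulVec]
      funext i
      cases i with
      | inl a => fin_cases a <;> simp [hlp, hpq]
      | inr j => simp [hpq]
  · -- generic case
    set a : ℝ := m * p * (m * q - lam) with ha
    set b : ℝ := m * q * (m * p - lam) with hb
    set c : ℝ := (m * p - lam) * (m * q - lam) with hcdef
    refine ⟨Sum.elim ![a, b] (fun _ => c), ?_, ?_⟩
    · intro h
      have := congrFun h (.inr ⟨0, hm0⟩)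
      simp only [Sum.elim_inr, Pi.zero_apply] at this
      exact hc this
    · rw [K2m_mulVec]
      have hsum : ∑ _j : Fin m, c = m * c := by
        simp [Finset.sum_const, mul_comm]
      funext i
      cases i with
      | inl i => fin_cases i <;> simp [hsum] <;> ring
      | inr j =>
        simp only [Sum.elim_inr, Sum.elim_inl, Matrix.cons_val_zero, Matrix.cons_val_one,
          Matrix.head_cons, Pi.smul_apply, smul_eq_mul]
        rw [ha, hb, hcdef]
        linear_combination (-lam) * hlam

set_option maxHeartbeats 1000000 in
/-- The nonzero Laplacian eigenvalues of the weighted `K(2,m)` are `p+q` and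
`(m+1)(p+q)/2 ± √((m+1)²(p+q)² - 4pqm(m+2))/2`; choosing `q = (m + √(m²-4))p/2`
reduces the set of distinct nonzero eigenvalues to exactly two elements. -/
theorem K2m_symmetry_breaking (m : ℕ) (hm : 2 ≤ m) (p q : ℝ) (hp : 0 < p) (hq : 0 < q) :
    (∀ lam ∈ ({p + q,
        (m + 1) * (p + q) / 2 +
          Real.sqrt ((m + 1) ^ 2 * (p + q) ^ 2 - 4 * p * q * m * (m + 2)) / 2,
        (m + 1) * (p + q) / 2 -
          Real.sqrt ((m + 1) ^ 2 * (p + q) ^ 2 - 4 * p * q * m * (m + 2)) / 2} : Set ℝ),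
      ∃ x : Fin 2 ⊕ Fin m → ℝ, x ≠ 0 ∧ K2mLaplacian m p q *ᵥ x = lam • x) ∧
    (∀ (t : ℝ) (x : Fin 2 ⊕ Fin m → ℝ), x ≠ 0 → K2mLaplacian m p q *ᵥ x = t • x →
      t = 0 ∨ t ∈ ({p + q,
        (m + 1) * (p + q) / 2 +
          Real.sqrt ((m + 1) ^ 2 * (p + q) ^ 2 - 4 * p * q * m * (m + 2)) / 2,
        (m + 1) * (p + q) / 2 -
          Real.sqrt ((m + 1) ^ 2 * (p + q) ^ 2 - 4 * p * q * m * (m + 2)) / 2} : Set ℝ)) ∧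
    (q = (1 / 2) * (m + Real.sqrt ((m : ℝ) ^ 2 - 4)) * p →
      ({p + q,
        (m + 1) * (p + q) / 2 +
          Real.sqrt ((m + 1) ^ 2 * (p + q) ^ 2 - 4 * p * q * m * (m + 2)) / 2,
        (m + 1) * (p + q) / 2 -
          Real.sqrt ((m + 1) ^ 2 * (p + q) ^ 2 - 4 * p * q * m * (m + 2)) / 2} : Set ℝ).ncard
        = 2) := by
  have hmR : (2:ℝ) ≤ (m:ℝ) := by exact_mod_cast hm
  set D : ℝ := (m + 1) ^ 2 * (p + q) ^ 2 - 4 * p * q * m * (m + 2) with hDdef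
  have hD : 0 < D := by nlinarith [sq_nonneg (p - q), mul_pos hp hq]
  have hsq : Real.sqrt D ^ 2 = D := Real.sq_sqrt hD.le
  have hsqpos : 0 < Real.sqrt D := Real.sqrt_pos.mpr hD
  refine ⟨?_, ?_, ?_⟩
  · -- existence of eigenvectors
    intro lam hlam
    simp only [Set.mem_insert_iff, Set.mem_singleton_iff] at hlam
    rcases hlam with h | h | h
    · -- lam = p + q
      subst h
      have h0 : (0:ℕ) < m := by omega
      have h1 : (1:ℕ) < m := by omega
      set i0 : Fin m := ⟨0, h0⟩
      set i1 : Fin m := ⟨1, h1⟩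
      have hne : i0 ≠ i1 := by simp [i0, i1, Fin.ext_iff]
      refine ⟨Sum.elim ![0, 0]
        (fun j => (if j = i0 then 1 else 0) - (if j = i1 then 1 else 0)), ?_, ?_⟩
      · intro h
        have := congrFun h (.inr i0)
        simp [hne] at this
      · rw [K2m_mulVec]
        have hsum : ∑ j : Fin m,
            ((if j = i0 then (1:ℝ) else 0) - (if j = i1 then 1 else 0)) = 0 := by
          rw [Finset.sum_sub_distrib]
          simp [Finset.sum_ite_eq']
        funext i
        cases i with
        | inl i => fin_cases i <;> simp [hsum]
        | inr j => simp
    · subst h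
      refine K2m_quad_eigen m hm p q hp hq _ ?_
      linear_combination (1/4 : ℝ) * hsq
    · subst h
      refine K2m_quad_eigen m hm p q hp hq _ ?_
      linear_combination (1/4 : ℝ) * hsq
  · -- converse
    intro t x hx h
    rw [K2m_mulVec] at h
    set a : ℝ := x (.inl 0) with ha
    set b : ℝ := x (.inl 1) with hb
    by_cases ht : t = p + q
    · right; left; exact ht
    have e1 : m * p * a - p * ∑ j, x (.inr j) = t * a := by
      have := congrFun h (.inl 0); simpa using this
    have e2 : m * q * b - q * ∑ j, x (.inr j) = t * b := by
      have := congrFun h (.inl 1); simpa using this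
    have e3 : ∀ j, (p + q) * x (.inr j) - p * a - q * b = t * x (.inr j) := by
      intro j
      have := congrFun h (.inr j); simpa using this
    have hpqtne : p + q - t ≠ 0 := fun h => ht (by linarith)
    set c : ℝ := (p * a + q * b) / (p + q - t) with hcdef
    have hc3 : (p + q - t) * c = p * a + q * b := by
      rw [hcdef]; field_simp
    have hxj : ∀ j, x (.inr j) = c := by
      intro j
      have h3 := e3 j
      rw [hcdef]
      field_simp
      linarith [h3]
    have hsum : ∑ j, x (.inr j) = m * c := by
      rw [Finset.sum_congr rfl (fun j _ => hxj j)]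
      simp [Finset.sum_const, mul_comm]
    rw [hsum] at e1 e2
    have e1' : (m * p - t) * a = m * p * c := by linarith [e1]
    have e2' : (m * q - t) * b = m * q * c := by linarith [e2]
    set Q : ℝ := (p + q - t) * (m * p - t) * (m * q - t)
      - m * p ^ 2 * (m * q - t) - m * q ^ 2 * (m * p - t) with hQdef
    have hQ0 : Q = 0 := by
      by_cases hc0 : c = 0
      · -- all leaves zero; hubs force t = m p = m q
        have hab : p * a + q * b = 0 := by rw [hc0] at hc3; linarith [hc3]
        have hane : a ≠ 0 := by
          intro ha0
          have hb0 : b = 0 := by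
            have : q * b = 0 := by rw [ha0] at hab; linarith
            exact (mul_eq_zero.mp this).resolve_left (ne_of_gt hq)
          apply hx
          funext i
          cases i with
          | inl i => fin_cases i <;> simp [← ha, ← hb, ha0, hb0]
          | inr j => simp [hxj j, hc0]
        have hbne : b ≠ 0 := by
          intro hb0
          apply hane
          have : p * a = 0 := by rw [hb0] at hab; linarith
          exact (mul_eq_zero.mp this).resolve_left (ne_of_gt hp)
        have e1'' : (m * p - t) * a = 0 := by rw [hc0, mul_zero] at e1'; exact e1'
        have e2'' : (m * q - t) * b = 0 := by rw [hc0, mul_zero] at e2'; exact e2'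
        have h1 : m * p - t = 0 := (mul_eq_zero.mp e1'').resolve_right hane
        have h2 : m * q - t = 0 := (mul_eq_zero.mp e2'').resolve_right hbne
        rw [hQdef]
        linear_combination ((p + q - t) * (m * q - t) - m * q ^ 2) * h1
          + (- m * p ^ 2) * h2
      · have hcQ : c * Q = 0 := by
          rw [hQdef]
          linear_combination (m * p - t) * (m * q - t) * hc3
            + p * (m * q - t) * e1' + q * (m * p - t) * e2'
        exact (mul_eq_zero.mp hcQ).resolve_left hc0
    have hcube : t * (t ^ 2 - (m + 1) * (p + q) * t + m * (m + 2) * p * q) = 0 := by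
      linear_combination (-1 : ℝ) * hQ0
    rcases mul_eq_zero.mp hcube with h0 | hquad
    · exact Or.inl h0
    · right
      have hprod : (t - (m + 1) * (p + q) / 2 - Real.sqrt D / 2)
          * (t - (m + 1) * (p + q) / 2 + Real.sqrt D / 2) = 0 := by
        linear_combination hquad - (1/4 : ℝ) * hsq
      rcases mul_eq_zero.mp hprod with h | h
      · right; left; linarith
      · right; right
        simp only [Set.mem_singleton_iff]
        linarith
  · -- symmetry breaking
    intro hq2
    have hs4 : Real.sqrt ((m:ℝ) ^ 2 - 4) ^ 2 = (m:ℝ) ^ 2 - 4 :=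
      Real.sq_sqrt (by nlinarith)
    have hkey : q ^ 2 - m * p * q + p ^ 2 = 0 := by
      rw [hq2]; linear_combination (p ^ 2 / 4) * hs4
    have hsqrtD : Real.sqrt D = (m - 1) * (p + q) := by
      rw [show D = ((m - 1) * (p + q)) ^ 2 by nlinarith [hkey]]
      exact Real.sqrt_sq (by nlinarith)
    have hlm : (m + 1) * (p + q) / 2 - Real.sqrt D / 2 = p + q := by
      rw [hsqrtD]; ring
    have hlp : (m + 1) * (p + q) / 2 + Real.sqrt D / 2 = m * (p + q) := by
      rw [hsqrtD]; ring
    rw [hlm, hlp]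
    have hne : p + q ≠ m * (p + q) := by nlinarith
    have : ({p + q, m * (p + q), p + q} : Set ℝ) = {p + q, m * (p + q)} := by
      ext y
      simp only [Set.mem_insert_iff, Set.mem_singleton_iff]
      tauto
    rw [this]
    exact Set.ncard_pair hne
end

section
/- Let 0 < z < 1 and a = 1, and let P be symmetric with P·1 = 1 and SLEM μ(P). Define P₋ = (P - zI)/(1-z) and P₊ = (P + zI)/(1+z). Then max{μ(P₋), μ(P₊)} = (μ(P) + z)/(1 - z), and this is < 1 if and only if μ(P) < 1 - 2z. -/
open Matrix

/-- Second largest eigenvalue modulus: supremum of `|t|` over eigenvalues `t` of `P`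
possessing an eigenvector orthogonal to the all-ones vector. -/
noncomputable def slem {N : ℕ} (P : Matrix (Fin N) (Fin N) ℝ) : ℝ :=
  sSup {r | ∃ (t : ℝ) (x : Fin N → ℝ), x ≠ 0 ∧ (∑ i, x i) = 0 ∧ P *ᵥ x = t • x ∧ r = |t|}

lemma eig_shift {N : ℕ} (c s t : ℝ) (P : Matrix (Fin N) (Fin N) ℝ) (x : Fin N → ℝ)
    (h : P *ᵥ x = t • x) :
    (c • (P + s • (1 : Matrix (Fin N) (Fin N) ℝ))) *ᵥ x = (c * (t + s)) • x := by
  rw [Matrix.smul_mulVec, Matrix.add_mulVec, Matrix.smul_mulVec,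
    Matrix.one_mulVec, h, ← add_smul, smul_smul]

lemma eig_shift' {N : ℕ} (c s t : ℝ) (hc : c ≠ 0) (P : Matrix (Fin N) (Fin N) ℝ)
    (x : Fin N → ℝ)
    (h : (c • (P + s • (1 : Matrix (Fin N) (Fin N) ℝ))) *ᵥ x = t • x) :
    P *ᵥ x = (c⁻¹ * t - s) • x := by
  have h2 : c • (P *ᵥ x + s • x) = t • x := by
    rw [← h, Matrix.smul_mulVec, Matrix.add_mulVec, Matrix.smul_mulVec,
      Matrix.one_mulVec]
  have h3 : P *ᵥ x + s • x = c⁻¹ • (t • x) := by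
    rw [← h2, smul_smul, inv_mul_cancel₀ hc, one_smul]
  have h4 : P *ᵥ x = c⁻¹ • (t • x) - s • x := by
    rw [← h3]; abel
  rw [h4, smul_smul, sub_smul]

lemma slem_set_bdd {N : ℕ} (P : Matrix (Fin N) (Fin N) ℝ) :
    BddAbove {r | ∃ (t : ℝ) (x : Fin N → ℝ), x ≠ 0 ∧ (∑ i, x i) = 0 ∧ P *ᵥ x = t • x ∧ r = |t|} := by
  refine ⟨‖LinearMap.toContinuousLinearMap P.mulVecLin‖, ?_⟩
  rintro r ⟨t, x, hx, -, he, rfl⟩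
  have hle : ‖P *ᵥ x‖ ≤ ‖LinearMap.toContinuousLinearMap P.mulVecLin‖ * ‖x‖ := by
    have := (LinearMap.toContinuousLinearMap P.mulVecLin).le_opNorm x
    simpa using this
  rw [he, norm_smul, Real.norm_eq_abs] at hle
  have hx' : 0 < ‖x‖ := norm_pos_iff.mpr hx
  exact le_of_mul_le_mul_right hle hx'

lemma slem_shift_eq {N : ℕ} (c s w μ : ℝ) (hc : 0 < c) (P : Matrix (Fin N) (Fin N) ℝ)
    (hμub : ∀ (t : ℝ) (x : Fin N → ℝ), x ≠ 0 → (∑ i, x i) = 0 → P *ᵥ x = t • x → |t| ≤ μ)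
    (hwit : ∃ x : Fin N → ℝ, x ≠ 0 ∧ (∑ i, x i) = 0 ∧ P *ᵥ x = w • x)
    (hw : |c * (w + s)| = c * (μ + |s|)) :
    slem (c • (P + s • (1 : Matrix (Fin N) (Fin N) ℝ))) = c * (μ + |s|) := by
  obtain ⟨x, hx0, hxs, hxe⟩ := hwit
  have hub : ∀ r ∈ {r | ∃ (t : ℝ) (x : Fin N → ℝ), x ≠ 0 ∧ (∑ i, x i) = 0 ∧
      (c • (P + s • (1 : Matrix (Fin N) (Fin N) ℝ))) *ᵥ x = t • x ∧ r = |t|},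
      r ≤ c * (μ + |s|) := by
    rintro r ⟨t, y, hy0, hys, hye, rfl⟩
    have hP : P *ᵥ y = (c⁻¹ * t - s) • y := eig_shift' c s t (ne_of_gt hc) P y hye
    have h1 : |c⁻¹ * t - s| ≤ μ := hμub _ y hy0 hys hP
    have h2 : |c⁻¹ * t| ≤ μ + |s| := by
      calc |c⁻¹ * t| = |(c⁻¹ * t - s) + s| := by ring_nf
        _ ≤ |c⁻¹ * t - s| + |s| := abs_add_le _ _
        _ ≤ μ + |s| := by linarith
    have h3 : |c⁻¹ * t| = c⁻¹ * |t| := by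
      rw [abs_mul, abs_of_pos (inv_pos.mpr hc)]
    rw [h3] at h2
    have h4 : c * (c⁻¹ * |t|) ≤ c * (μ + |s|) := mul_le_mul_of_nonneg_left h2 hc.le
    rwa [← mul_assoc, mul_inv_cancel₀ hc.ne', one_mul] at h4
  have hmem : c * (μ + |s|) ∈ {r | ∃ (t : ℝ) (x : Fin N → ℝ), x ≠ 0 ∧ (∑ i, x i) = 0 ∧
      (c • (P + s • (1 : Matrix (Fin N) (Fin N) ℝ))) *ᵥ x = t • x ∧ r = |t|} :=
    ⟨c * (w + s), x, hx0, hxs, eig_shift c s w P x hxe, hw.symm⟩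
  exact le_antisymm (csSup_le ⟨_, hmem⟩ hub) (le_csSup ⟨_, hub⟩ hmem)

/-- With `a = 1`, the alternating steps `P₋ = (P - zI)/(1-z)` and `P₊ = (P + zI)/(1+z)` satisfy
`max{μ(P₋), μ(P₊)} = (μ(P)+z)/(1-z)`, which is `< 1` iff `μ(P) < 1 - 2z`. -/
theorem alternating_steps_slem_a_one {N : ℕ} (z μ : ℝ) (hz0 : 0 < z) (hz1 : z < 1)
    (P : Matrix (Fin N) (Fin N) ℝ) (hsymm : P.IsSymm) (hP1 : P *ᵥ 1 = 1)
    (hμ : slem P = μ)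
    (hcentp : ∃ x : Fin N → ℝ, x ≠ 0 ∧ (∑ i, x i) = 0 ∧ P *ᵥ x = μ • x)
    (hcentm : ∃ x : Fin N → ℝ, x ≠ 0 ∧ (∑ i, x i) = 0 ∧ P *ᵥ x = (-μ) • x) :
    max (slem ((1 - z)⁻¹ • (P - z • 1))) (slem ((1 + z)⁻¹ • (P + z • 1)))
      = (μ + z) / (1 - z) ∧
    ((μ + z) / (1 - z) < 1 ↔ μ < 1 - 2 * z) := by
  have h1z : (0:ℝ) < 1 - z := by linarith
  have h1z' : (0:ℝ) < 1 + z := by linarith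
  -- μ is an upper bound on |eigenvalues| and μ ≥ 0
  have hμub : ∀ (t : ℝ) (x : Fin N → ℝ), x ≠ 0 → (∑ i, x i) = 0 → P *ᵥ x = t • x → |t| ≤ μ := by
    intro t x hx0 hxs hxe
    have : |t| ∈ {r | ∃ (t : ℝ) (x : Fin N → ℝ), x ≠ 0 ∧ (∑ i, x i) = 0 ∧ P *ᵥ x = t • x ∧ r = |t|} :=
      ⟨t, x, hx0, hxs, hxe, rfl⟩
    have := le_csSup (slem_set_bdd P) this
    rwa [← slem, hμ] at this
  have hμ0 : 0 ≤ μ := by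
    obtain ⟨x, hx0, hxs, hxe⟩ := hcentp
    have := hμub μ x hx0 hxs hxe
    exact le_trans (abs_nonneg μ) this
  -- rewrite P - z • 1 as P + (-z) • 1
  have hsub : P - z • (1 : Matrix (Fin N) (Fin N) ℝ) = P + (-z) • 1 := by
    rw [sub_eq_add_neg, neg_smul]
  -- slem of P₋
  have habsm : |(1 - z)⁻¹ * (-μ + -z)| = (1 - z)⁻¹ * (μ + |(-z)|) := by
    rw [abs_mul, abs_of_pos (inv_pos.mpr h1z), abs_of_nonpos (by linarith : -μ + -z ≤ 0),
      abs_neg, abs_of_pos hz0]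
    ring
  have hm : slem ((1 - z)⁻¹ • (P - z • 1)) = (μ + z) / (1 - z) := by
    rw [hsub, slem_shift_eq (1 - z)⁻¹ (-z) (-μ) μ (inv_pos.mpr h1z) P hμub hcentm habsm,
      abs_of_nonpos (by linarith : -z ≤ 0), div_eq_inv_mul]
    ring
  -- slem of P₊
  have habsp : |(1 + z)⁻¹ * (μ + z)| = (1 + z)⁻¹ * (μ + |z|) := by
    rw [abs_mul, abs_of_pos (inv_pos.mpr h1z'), abs_of_nonneg (by linarith : (0:ℝ) ≤ μ + z),
      abs_of_pos hz0]
  have hp : slem ((1 + z)⁻¹ • (P + z • 1)) = (μ + z) / (1 + z) := by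
    rw [slem_shift_eq (1 + z)⁻¹ z μ μ (inv_pos.mpr h1z') P hμub hcentp habsp,
      abs_of_pos hz0, div_eq_inv_mul]
  refine ⟨?_, ?_⟩
  · rw [hm, hp, max_eq_left]
    apply div_le_div_of_nonneg_left (by linarith) h1z (by linarith)
  · rw [div_lt_one h1z]
    constructor <;> intro <;> linarith
end

section
/- Let 0 < z < 1 and P symmetric with P·1 = 1, SLEM μ(P) < 1, and suppose under arbitrary link failures each step applies a matrix whose nontrivial eigenvalues lie in [-1, 1]. The worst-case two-step gain on a nontrivial eigenvector under resonant link failure of the alternating scheme P₋ = (P - zI)/(1-z), P₊ = (P + zI)/(1+z) is |(-μ(P) - z)/(1 - z)| (with the other factor at most 1 in modulus), and this is < 1 if and only if z < (1 - μ(P))/2. -/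
open Matrix

/-- Resonant link failure: the worst-case two-step gain of the alternating scheme on a
nontrivial eigenvector, over an eigenvalue `s` with `|s| ≤ μ(P)` in the `P₋`-step and an
eigenvalue `t` with `|t| ≤ 1` in the failed `P₊`-step, is `|(-μ(P) - z)/(1 - z)|`
(the `P₊` factor being at most 1 in modulus), and this is `< 1` iff `z < (1 - μ(P))/2`. -/
theorem resonant_link_failure (z μ : ℝ) (hz0 : 0 < z) (hz1 : z < 1)
    {N : ℕ} (P : Matrix (Fin N) (Fin N) ℝ) (hsymm : P.IsSymm) (hP1 : P *ᵥ 1 = 1)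
    (hμ : slem P = μ) (hμ0 : 0 ≤ μ) (hμ1 : μ < 1) :
    (∀ s t : ℝ, |s| ≤ μ → |t| ≤ 1 →
      |((s - z) / (1 - z)) * ((t + z) / (1 + z))| ≤ |(-μ - z) / (1 - z)|) ∧
    (∀ t : ℝ, |t| ≤ 1 → |(t + z) / (1 + z)| ≤ 1) ∧
    |(((-μ) - z) / (1 - z)) * ((1 + z) / (1 + z))| = |(-μ - z) / (1 - z)| ∧
    (|(-μ - z) / (1 - z)| < 1 ↔ z < (1 - μ) / 2) := by
  have h1z : (0:ℝ) < 1 - z := by linarith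
  have h1z' : (0:ℝ) < 1 + z := by linarith
  have key : |(-μ - z) / (1 - z)| = (μ + z) / (1 - z) := by
    rw [abs_div, abs_of_pos h1z, abs_of_nonpos (by linarith : -μ - z ≤ 0)]
    ring_nf
  have hfac : ∀ t : ℝ, |t| ≤ 1 → |(t + z) / (1 + z)| ≤ 1 := by
    intro t ht
    rw [abs_div, abs_of_pos h1z', div_le_one h1z']
    have h := abs_le.mp ht
    rw [abs_le]; constructor <;> linarith [h.1, h.2]
  refine ⟨?_, hfac, ?_, ?_⟩
  · intro s t hs ht
    rw [abs_mul, key]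
    have h1 : |(s - z) / (1 - z)| ≤ (μ + z) / (1 - z) := by
      rw [abs_div, abs_of_pos h1z]
      have hsa := abs_le.mp hs
      have : |s - z| ≤ μ + z := by
        rw [abs_le]; constructor <;> linarith [hsa.1, hsa.2]
      exact div_le_div_of_nonneg_right this h1z.le
    calc |(s - z) / (1 - z)| * |(t + z) / (1 + z)|
        ≤ (μ + z) / (1 - z) * 1 :=
          mul_le_mul h1 (hfac t ht) (abs_nonneg _) (by positivity)
      _ = (μ + z) / (1 - z) := mul_one _
  · rw [div_self (by linarith : (1:ℝ) + z ≠ 0), mul_one]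
  · rw [key, div_lt_one h1z]
    constructor <;> intro <;> linarith
end

section
/- Let G be a connected undirected graph and G² its square (nodes adjacent in G² iff connected in G by a path of length at most 2). For any symmetric P supported on G with P·1 = 1 and any second-order polynomial p₂ with p₂(1) = 1, the matrix p₂(P) is a symmetric matrix supported on G² with p₂(P)·1 = 1. Consequently, the optimal accelerated rate μ₂(P*_{p₂}) over P supported on G is at least the optimal single-step SLEM μ(P*_{G²}) over all weight matrices supported on G². -/
open Matrix

/-- `P` is supported on `G`: off-diagonal entries vanish outside the edges of `G`. -/
def SupportedOn {N : ℕ} (G : SimpleGraph (Fin N)) (P : Matrix (Fin N) (Fin N) ℝ) : Prop :=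
  ∀ i j : Fin N, i ≠ j → ¬G.Adj i j → P i j = 0

/-- Adjacency of the square graph `G²`: joined in `G` by a path of length at most 2. -/
def SquareAdj {N : ℕ} (G : SimpleGraph (Fin N)) (i j : Fin N) : Prop :=
  i ≠ j ∧ (G.Adj i j ∨ ∃ k, G.Adj i k ∧ G.Adj k j)

lemma slem_nonneg {N : ℕ} (P : Matrix (Fin N) (Fin N) ℝ) : 0 ≤ slem P := by
  apply Real.sSup_nonneg
  rintro r ⟨t, x, -, -, -, rfl⟩
  exact abs_nonneg t

lemma poly_props {N : ℕ} (G : SimpleGraph (Fin N))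
    (P : Matrix (Fin N) (Fin N) ℝ) (c₀ c₁ c₂ : ℝ)
    (hsym : P.IsSymm) (hsupp : SupportedOn G P) (hmv : P *ᵥ 1 = 1) (hc : c₀ + c₁ + c₂ = 1) :
    (c₀ • (1 : Matrix (Fin N) (Fin N) ℝ) + c₁ • P + c₂ • (P * P)).IsSymm ∧
    (∀ i j : Fin N, i ≠ j → ¬SquareAdj G i j →
      (c₀ • (1 : Matrix (Fin N) (Fin N) ℝ) + c₁ • P + c₂ • (P * P)) i j = 0) ∧
    (c₀ • (1 : Matrix (Fin N) (Fin N) ℝ) + c₁ • P + c₂ • (P * P)) *ᵥ 1 = 1 := by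
  refine ⟨?_, ?_, ?_⟩
  · simp [Matrix.IsSymm, transpose_add, transpose_smul, transpose_mul, hsym.eq]
  · intro i j hij hsq
    have hadj : ¬ G.Adj i j := fun h => hsq ⟨hij, Or.inl h⟩
    have hPij : P i j = 0 := hsupp i j hij hadj
    have hPP : (P * P) i j = 0 := by
      rw [mul_apply]
      apply Finset.sum_eq_zero
      intro k _
      by_cases hk : k = i
      · subst hk; rw [hPij, mul_zero]
      by_cases hk' : k = j
      · subst hk'; rw [hPij, zero_mul]
      have : ¬ (G.Adj i k ∧ G.Adj k j) := fun h => hsq ⟨hij, Or.inr ⟨k, h⟩⟩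
      rcases not_and_or.mp this with h | h
      · rw [hsupp i k (fun e => hk e.symm) h, zero_mul]
      · rw [hsupp k j hk' h, mul_zero]
    simp [Matrix.add_apply, Matrix.smul_apply, one_apply_ne hij, hPij, hPP]
  · have h2 : (P * P) *ᵥ 1 = 1 := by
      rw [← mulVec_mulVec, hmv, hmv]
    rw [add_mulVec, add_mulVec, smul_mulVec, smul_mulVec, smul_mulVec,
      one_mulVec, hmv, h2]
    funext i
    simp only [Pi.add_apply, Pi.smul_apply, Pi.one_apply, smul_eq_mul, mul_one]
    exact hc

/-- Any second-order polynomial `p₂(P) = c₀I + c₁P + c₂P²` (with `p₂(1)=1`) of a weight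
matrix supported on `G` is a symmetric weight matrix supported on `G²`; consequently the
optimal `p₂`-accelerated rate on `G` is bounded below by the fastest single-step SLEM
achievable on `G²`. -/
theorem square_graph_lower_bound {N : ℕ} (G : SimpleGraph (Fin N)) (hconn : G.Connected) :
    (∀ (P : Matrix (Fin N) (Fin N) ℝ) (c₀ c₁ c₂ : ℝ),
      P.IsSymm → SupportedOn G P → P *ᵥ 1 = 1 → c₀ + c₁ + c₂ = 1 →
      (c₀ • (1 : Matrix (Fin N) (Fin N) ℝ) + c₁ • P + c₂ • (P * P)).IsSymm ∧
      (∀ i j : Fin N, i ≠ j → ¬SquareAdj G i j →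
        (c₀ • (1 : Matrix (Fin N) (Fin N) ℝ) + c₁ • P + c₂ • (P * P)) i j = 0) ∧
      (c₀ • (1 : Matrix (Fin N) (Fin N) ℝ) + c₁ • P + c₂ • (P * P)) *ᵥ 1 = 1) ∧
    sInf {r | ∃ (Q : Matrix (Fin N) (Fin N) ℝ), Q.IsSymm ∧
        (∀ i j : Fin N, i ≠ j → ¬SquareAdj G i j → Q i j = 0) ∧ Q *ᵥ 1 = 1 ∧ r = slem Q} ≤
    sInf {r | ∃ (P : Matrix (Fin N) (Fin N) ℝ) (c₀ c₁ c₂ : ℝ), P.IsSymm ∧ SupportedOn G P ∧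
        P *ᵥ 1 = 1 ∧ c₀ + c₁ + c₂ = 1 ∧
        r = slem (c₀ • (1 : Matrix (Fin N) (Fin N) ℝ) + c₁ • P + c₂ • (P * P))} := by
  constructor
  · intro P c₀ c₁ c₂ hsym hsupp hmv hc
    exact poly_props G P c₀ c₁ c₂ hsym hsupp hmv hc
  · apply csInf_le_csInf
    · exact ⟨0, by rintro r ⟨Q, -, -, -, rfl⟩; exact slem_nonneg Q⟩
    · refine ⟨_, 1, 1, 0, 0, isSymm_one, fun i j hij _ => one_apply_ne hij,
        one_mulVec 1, by ring, rfl⟩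
    · rintro r ⟨P, c₀, c₁, c₂, hsym, hsupp, hmv, hc, rfl⟩
      obtain ⟨h1, h2, h3⟩ := poly_props G P c₀ c₁ c₂ hsym hsupp hmv hc
      exact ⟨_, h1, h2, h3, rfl⟩
end
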